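/- For n ≥ 3, the submonoid B⁺_{n−1} of B⁺_n is closed under right divisors: if β ∈ B⁺_{n−1} and γ ∈ B⁺_n right divides β, then γ ∈ B⁺_{n−1}. -/

import Mathlib

namespace Braid

/-- Defining relations of the braid group, with generators indexed by `Fin m`
(the index `i : Fin m` stands for the Artin generator `σ_{i+1}`). -/
def braidRels (m : ℕ) : Set (FreeGroup (Fin m)) :=
  {r | ∃ i j : Fin m,
      ((i : ℕ) + 2 ≤ (j : ℕ) ∧
        r = FreeGroup.of i * FreeGroup.of j * (FreeGroup.of i)⁻¹ * (FreeGroup.of j)⁻¹) ∨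
      ((j : ℕ) = (i : ℕ) + 1 ∧
        r = FreeGroup.of i * FreeGroup.of j * FreeGroup.of i *
            (FreeGroup.of j)⁻¹ * (FreeGroup.of i)⁻¹ * (FreeGroup.of j)⁻¹)}

/-- The braid group `B_n` on `n` strands, presented by the Artin generators
`σ_1, …, σ_{n-1}` and the braid relations. -/
abbrev B (n : ℕ) : Type := PresentedGroup (braidRels (n - 1))

/-- The Artin generator `σ_i` of `B n`, for `1 ≤ i ≤ n-1` (junk value `1` otherwise). -/
def gen (n i : ℕ) : B n :=
  if h : i - 1 < n - 1 then PresentedGroup.of (⟨i - 1, h⟩ : Fin (n - 1)) else 1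

/-- The positive braid monoid `B⁺_k` inside `B n`: the submonoid generated by
`σ_1, …, σ_{k-1}`. -/
def Bplus (n k : ℕ) : Submonoid (B n) :=
  Submonoid.closure {x | ∃ i, 1 ≤ i ∧ i + 1 ≤ k ∧ x = gen n i}

/-- The subgroup `B_k` of `B n`, generated by `σ_1, …, σ_{k-1}`. -/
def Bsub (n k : ℕ) : Subgroup (B n) :=
  Subgroup.closure {x | ∃ i, 1 ≤ i ∧ i + 1 ≤ k ∧ x = gen n i}

/-- `β` left-divides `γ` (with respect to the positive monoid `B⁺_n`). -/
def LDiv (n : ℕ) (β γ : B n) : Prop := β⁻¹ * γ ∈ Bplus n n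

/-- `β` right-divides `γ` (with respect to the positive monoid `B⁺_n`). -/
def RDiv (n : ℕ) (β γ : B n) : Prop := γ * β⁻¹ ∈ Bplus n n

/-- The Garside element `Δ_k = (σ_1⋯σ_{k-1})(σ_1⋯σ_{k-2})⋯(σ_1σ_2)σ_1` of `B⁺_k`,
viewed inside `B n`. -/
def delta (n k : ℕ) : B n :=
  ((List.range (k - 1)).reverse.map
    (fun j => ((List.range' 1 (j + 1)).map (gen n)).prod)).prod

/-- The `k`-th power of the flip automorphism `φ_n` of `B n`:
conjugation by `Δ_n^k`. -/
def flip (n k : ℕ) (x : B n) : B n := delta n n ^ k * x * (delta n n ^ k)⁻¹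

/-- The set `φ_n^k(B⁺_{n-1})` inside `B n`. -/
def flipSet (n k : ℕ) : Set (B n) := flip n k '' (Bplus n (n - 1) : Set (B n))

/-- `δ` is the maximal right divisor of `β` lying in the set `X`:
`δ ∈ X`, `δ` right-divides `β`, and every right divisor of `β` lying in `X`
right-divides `δ`. -/
def IsMaxRDivIn (n : ℕ) (X : Set (B n)) (β δ : B n) : Prop :=
  δ ∈ X ∧ RDiv n δ β ∧ ∀ γ ∈ X, RDiv n γ β → RDiv n γ δ

/-- The product `φ_n^{d-1}(b d) ⋯ φ_n^{k-1}(b k)` (factors in decreasing order of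
the index, from `d` down to `k`). -/
def tailProd (n : ℕ) (b : ℕ → B n) (k d : ℕ) : B n :=
  ((List.range' k (d + 1 - k)).reverse.map (fun l => flip n (l - 1) (b l))).prod

/-- `(b d, …, b 1)` is the `φ_n`-splitting of `β`: each `b k` lies in `B⁺_{n-1}`,
`b d ≠ 1`, `β = φ_n^{d-1}(b d) ⋯ φ_n(b 2) (b 1)`, and for each `k`, the element
`φ_n^{k-1}(b k)` is the maximal right divisor of `φ_n^{d-1}(b d) ⋯ φ_n^{k-1}(b k)`
lying in `φ_n^{k-1}(B⁺_{n-1})`. -/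
def IsSplitting (n d : ℕ) (b : ℕ → B n) (β : B n) : Prop :=
  1 ≤ d ∧ (∀ k, 1 ≤ k → k ≤ d → b k ∈ Bplus n (n - 1)) ∧ b d ≠ 1 ∧
  β = tailProd n b 1 d ∧
  ∀ k, 1 ≤ k → k ≤ d →
    IsMaxRDivIn n (flipSet n (k - 1)) (tailProd n b k d) (flip n (k - 1) (b k))

/-- Evaluation of a word over the letters `σ_i^{±1}` in `B n`: the letter `(i, true)`
stands for `σ_i` and `(i, false)` for `σ_i⁻¹`. -/
def evalWord (n : ℕ) (w : List (ℕ × Bool)) : B n :=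
  (w.map (fun p => if p.2 then gen n p.1 else (gen n p.1)⁻¹)).prod

/-- A word over the letters `σ_j^{±1}` is `σ_i`-positive: it contains at least one
letter `σ_i`, no letter `σ_i⁻¹` and no letter `σ_j^{±1}` with `j > i`. -/
def SigmaPos (i : ℕ) (w : List (ℕ × Bool)) : Prop :=
  (i, true) ∈ w ∧ (i, false) ∉ w ∧ ∀ p ∈ w, 1 ≤ p.1 ∧ p.1 ≤ i

/-- A word over the letters `σ_j^{±1}` is `σ_i`-negative: it contains at least one
letter `σ_i⁻¹`, no letter `σ_i` and no letter `σ_j^{±1}` with `j > i`. -/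
def SigmaNeg (i : ℕ) (w : List (ℕ × Bool)) : Prop :=
  (i, false) ∈ w ∧ (i, true) ∉ w ∧ ∀ p ∈ w, 1 ≤ p.1 ∧ p.1 ≤ i

/-- The Dehornoy ordering on `B n`: `β < γ` iff `β⁻¹γ` is represented by a
`σ_i`-positive word for some `i ≤ n-1`. -/
def dlt (n : ℕ) (β γ : B n) : Prop :=
  ∃ i w, i + 1 ≤ n ∧ SigmaPos i w ∧ evalWord n w = β⁻¹ * γ

/-- The nonstrict Dehornoy ordering. -/
def dle (n : ℕ) (β γ : B n) : Prop := dlt n β γ ∨ β = γ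

/-- The minimal length of a word over `σ_1^{±1}, …, σ_{n-1}^{±1}` representing `β`. -/
noncomputable def normSigma (n : ℕ) (β : B n) : ℕ :=
  sInf {l | ∃ w : List (ℕ × Bool), (∀ p ∈ w, 1 ≤ p.1 ∧ p.1 ≤ n - 1) ∧
    evalWord n w = β ∧ w.length = l}

/-- The (common) length of the positive words over `σ_1, …, σ_{n-1}` representing a
positive braid `β`. -/
noncomputable def posLen (n : ℕ) (β : B n) : ℕ :=
  sInf {l | ∃ w : List (ℕ × Bool), (∀ p ∈ w, 1 ≤ p.1 ∧ p.1 ≤ n - 1 ∧ p.2 = true) ∧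
    evalWord n w = β ∧ w.length = l}

/-- The Birman–Ko–Lee generator `a_{p,q} = σ_p ⋯ σ_{q-2} σ_{q-1} σ_{q-2}⁻¹ ⋯ σ_p⁻¹`
of `B n`. -/
def bkl (n p q : ℕ) : B n :=
  ((List.range' p (q - 1 - p)).map (gen n)).prod * gen n (q - 1) *
    (((List.range' p (q - 1 - p)).map (gen n)).prod)⁻¹

/-- The dual braid monoid `B⁺*_n`: the submonoid of `B n` generated by the
Birman–Ko–Lee generators. -/
def DualBplus (n : ℕ) : Submonoid (B n) :=
  Submonoid.closure {x | ∃ p q, 1 ≤ p ∧ p < q ∧ q ≤ n ∧ x = bkl n p q}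

/-- Evaluation in `B n` of a word over the letters `a_{p,q}^{±1}`. -/
def evalDual (n : ℕ) (w : List ((ℕ × ℕ) × Bool)) : B n :=
  (w.map (fun l => if l.2 then bkl n l.1.1 l.1.2 else (bkl n l.1.1 l.1.2)⁻¹)).prod

/-- The minimal length of a word over the letters `a_{p,q}^{±1}` (`1 ≤ p < q ≤ n`)
representing `β`. -/
noncomputable def normDual (n : ℕ) (β : B n) : ℕ :=
  sInf {l | ∃ w : List ((ℕ × ℕ) × Bool),
    (∀ p ∈ w, 1 ≤ p.1.1 ∧ p.1.1 < p.1.2 ∧ p.1.2 ≤ n) ∧ evalDual n w = β ∧ w.length = l}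


/-! ### Auxiliary development: Burau representation at t = 1/2 -/

section BurauAux

/-- Forward map of the Burau (t = 1/2) row action on the coordinate pair `(a,b)`. -/
def Tf {n : ℕ} (a b : Fin n) (r : Fin n → ℚ) : Fin n → ℚ :=
  fun k => if k = a then r a / 2 + r b else if k = b then r a / 2 else r k

/-- Inverse of `Tf`. -/
def Tg {n : ℕ} (a b : Fin n) (r : Fin n → ℚ) : Fin n → ℚ :=
  fun k => if k = a then 2 * r b else if k = b then r a - r b else r k

lemma Tg_Tf {n : ℕ} {a b : Fin n} (hab : a ≠ b) (r : Fin n → ℚ) :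
    Tg a b (Tf a b r) = r := by
  funext k
  simp only [Tf, Tg]
  split_ifs with h1 h2 <;> simp_all <;> ring

lemma Tf_Tg {n : ℕ} {a b : Fin n} (hab : a ≠ b) (r : Fin n → ℚ) :
    Tf a b (Tg a b r) = r := by
  funext k
  simp only [Tf, Tg]
  split_ifs with h1 h2 <;> simp_all <;> ring

/-- The permutation of `Fin n → ℚ` given by the Burau row action. -/
def TP {n : ℕ} (a b : Fin n) (hab : a ≠ b) : Equiv.Perm (Fin n → ℚ) :=
  ⟨Tf a b, Tg a b, fun r => Tg_Tf hab r, fun r => Tf_Tg hab r⟩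

lemma TP_apply {n : ℕ} (a b : Fin n) (hab : a ≠ b) (r : Fin n → ℚ) :
    TP a b hab r = Tf a b r := rfl

lemma Tf_read {n : ℕ} {a b : Fin n} (r : Fin n → ℚ) {k : Fin n}
    (h1 : k ≠ a) (h2 : k ≠ b) : Tf a b r k = r k := by
  simp [Tf, h1, h2]

lemma Tf_comm {n : ℕ} {a b c d : Fin n} (hab : a ≠ b)
    (h1 : a ≠ c) (h2 : a ≠ d) (h3 : b ≠ c) (h4 : b ≠ d) (r : Fin n → ℚ) :
    Tf a b (Tf c d r) = Tf c d (Tf a b r) := by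
  funext k
  simp only [Tf]
  split_ifs <;> simp_all [Tf_read] <;>
    simp_all [Tf, hab, h1, h2, h3, h4, h1.symm, h2.symm, h3.symm, h4.symm]

lemma Tf_braid {n : ℕ} {a b c : Fin n} (hab : a ≠ b) (hbc : b ≠ c) (hac : a ≠ c)
    (r : Fin n → ℚ) :
    Tf a b (Tf b c (Tf a b r)) = Tf b c (Tf a b (Tf b c r)) := by
  funext k
  simp only [Tf]
  split_ifs <;>
    simp_all [Tf, hab, hbc, hac, hab.symm, hbc.symm, hac.symm] <;> ring

/-- The Burau permutation attached to the `i`-th Artin generator. -/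
def gp (n : ℕ) (i : Fin (n - 1)) : Equiv.Perm (Fin n → ℚ) :=
  TP ⟨(i : ℕ), by have := i.isLt; omega⟩ ⟨(i : ℕ) + 1, by have := i.isLt; omega⟩
    (by simp [Fin.ext_iff])

lemma gp_apply (n : ℕ) (i : Fin (n - 1)) (r : Fin n → ℚ) :
    gp n i r = Tf ⟨(i : ℕ), by have := i.isLt; omega⟩ ⟨(i : ℕ) + 1, by have := i.isLt; omega⟩ r :=
  rfl

lemma braid_rels_hold (n : ℕ) :
    ∀ r ∈ braidRels (n - 1), FreeGroup.lift (gp n) r = 1 := by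
  rintro r ⟨i, j, (⟨hij, rfl⟩ | ⟨hij, rfl⟩)⟩ <;>
    simp only [map_mul, map_inv, FreeGroup.lift_apply_of]
  · have hI := i.isLt; have hJ := j.isLt
    have hc : gp n i * gp n j = gp n j * gp n i := by
      refine Equiv.ext fun r => ?_
      exact Tf_comm (a := ⟨(i : ℕ), by omega⟩) (b := ⟨(i : ℕ) + 1, by omega⟩)
        (c := ⟨(j : ℕ), by omega⟩) (d := ⟨(j : ℕ) + 1, by omega⟩)
        (by simp only [ne_eq, Fin.mk.injEq]; omega) (by simp only [ne_eq, Fin.mk.injEq]; omega)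
        (by simp only [ne_eq, Fin.mk.injEq]; omega) (by simp only [ne_eq, Fin.mk.injEq]; omega)
        (by simp only [ne_eq, Fin.mk.injEq]; omega) r
    rw [hc]; group
  · have hI := i.isLt; have hJ := j.isLt
    have hj : j = ⟨(i : ℕ) + 1, by omega⟩ := Fin.ext hij
    rw [hj]
    have hb : gp n i * gp n ⟨(i : ℕ) + 1, by omega⟩ * gp n i =
        gp n ⟨(i : ℕ) + 1, by omega⟩ * gp n i * gp n ⟨(i : ℕ) + 1, by omega⟩ := by
      refine Equiv.ext fun r => ?_
      exact Tf_braid (a := ⟨(i : ℕ), by omega⟩) (b := ⟨(i : ℕ) + 1, by omega⟩)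
        (c := ⟨(i : ℕ) + 1 + 1, by omega⟩)
        (by simp only [ne_eq, Fin.mk.injEq]; omega) (by simp only [ne_eq, Fin.mk.injEq]; omega)
        (by simp only [ne_eq, Fin.mk.injEq]; omega) r
    rw [hb]; group

end BurauAux

/-- The Burau representation of `B n` at `t = 1/2`, acting on row vectors. -/
noncomputable def burau (n : ℕ) : B n →* Equiv.Perm (Fin n → ℚ) :=
  PresentedGroup.toGroup (braid_rels_hold n)

/-- The permutation attached to the Artin generator `σ_m` (junk `1` out of range). -/
def act (n m : ℕ) : Equiv.Perm (Fin n → ℚ) :=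
  if h : m - 1 < n - 1 then gp n ⟨m - 1, h⟩ else 1

lemma burau_gen (n m : ℕ) : burau n (gen n m) = act n m := by
  unfold gen act
  split
  · exact PresentedGroup.toGroup.of _
  · exact map_one _

lemma burau_genprod (n : ℕ) (L : List ℕ) :
    burau n ((L.map (gen n)).prod) = (L.map (act n)).prod := by
  induction L with
  | nil => simp
  | cons a L ih => simp [ih, burau_gen]

/-- Membership in `Bplus n k` in terms of lists of indices. -/
lemma mem_Bplus_iff_list {n k : ℕ} {x : B n} :
    x ∈ Bplus n k ↔ ∃ L : List ℕ, (∀ m ∈ L, 1 ≤ m ∧ m + 1 ≤ k) ∧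
      (L.map (gen n)).prod = x := by
  constructor
  · intro hx
    refine Submonoid.closure_induction ?_ ?_ ?_ hx
    · rintro y ⟨m, h1, h2, rfl⟩
      exact ⟨[m], by simp [h1, h2]; omega⟩
    · exact ⟨[], by simp, by simp⟩
    · rintro y z - - ⟨Ly, hy1, hy2⟩ ⟨Lz, hz1, hz2⟩
      refine ⟨Ly ++ Lz, ?_, by simp [← hy2, ← hz2]⟩
      intro m hm
      rcases List.mem_append.mp hm with h | h
      · exact hy1 m h
      · exact hz1 m h
  · rintro ⟨L, hL, rfl⟩
    refine Submonoid.list_prod_mem _ ?_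
    intro y hy
    rw [List.mem_map] at hy
    obtain ⟨m, hm, rfl⟩ := hy
    exact Submonoid.subset_closure ⟨m, (hL m hm).1, (hL m hm).2, rfl⟩

section Invariant

variable {n : ℕ}

/-- nonnegative with total mass one. -/
def GoodV (n : ℕ) (r : Fin n → ℚ) : Prop := (∀ k, 0 ≤ r k) ∧ (∑ k, r k) = 1

lemma Tf_nonneg {a b : Fin n} (r : Fin n → ℚ) (hr : ∀ k, 0 ≤ r k) (k : Fin n) :
    0 ≤ Tf a b r k := by
  simp only [Tf]
  split_ifs
  · have := hr a; have := hr b; linarith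
  · have := hr a; linarith
  · exact hr k

lemma Tf_sum {a b : Fin n} (hab : a ≠ b) (r : Fin n → ℚ) :
    ∑ k, Tf a b r k = ∑ k, r k := by
  have key : ∀ k, Tf a b r k =
      r k + ((if k = a then r b - r a / 2 else 0) + (if k = b then r a / 2 - r b else 0)) := by
    intro k
    simp only [Tf]
    split_ifs with h1 h2 <;> simp_all <;> ring
  rw [Finset.sum_congr rfl fun k _ => key k]
  simp [Finset.sum_add_distrib]

lemma GoodV_Tf {a b : Fin n} (hab : a ≠ b) (r : Fin n → ℚ) (hr : GoodV n r) :
    GoodV n (Tf a b r) :=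
  ⟨Tf_nonneg r hr.1, by rw [Tf_sum hab]; exact hr.2⟩

lemma le_one_of_GoodV (r : Fin n → ℚ) (hr : GoodV n r) (k : Fin n) : r k ≤ 1 := by
  rw [← hr.2]
  exact Finset.single_le_sum (fun j _ => hr.1 j) (Finset.mem_univ k)

end Invariant

section TopCoord

variable {n : ℕ}

lemma act_GoodV (m : ℕ) (r : Fin n → ℚ) (hr : GoodV n r) : GoodV n (act n m r) := by
  unfold act
  split
  · rw [gp_apply]
    exact GoodV_Tf (by simp only [ne_eq, Fin.mk.injEq]; omega) r hr
  · simpa using hr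

lemma act_last_eq (m : ℕ) (h1 : 1 ≤ m) (h2 : m + 1 ≤ n - 1) (r : Fin n → ℚ)
    (hτ : n - 1 < n) : act n m r ⟨n - 1, hτ⟩ = r ⟨n - 1, hτ⟩ := by
  unfold act
  split
  · rw [gp_apply]
    exact Tf_read r (by simp only [ne_eq, Fin.mk.injEq]; omega)
      (by simp only [ne_eq, Fin.mk.injEq]; omega)
  · rfl

lemma act_top_lt (hn : 3 ≤ n) (r : Fin n → ℚ) (hr : GoodV n r) (hτ : n - 1 < n) :
    act n (n - 1) r ⟨n - 1, hτ⟩ < 1 := by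
  unfold act
  split
  · rw [gp_apply]
    simp only [Tf]
    rw [if_neg (by simp only [Fin.mk.injEq]; omega),
      if_pos (by simp only [Fin.mk.injEq]; omega)]
    have := le_one_of_GoodV r hr ⟨n - 1 - 1, by omega⟩
    linarith
  · omega

lemma act_last_lt (hn : 3 ≤ n) (m : ℕ) (h1 : 1 ≤ m) (hm : m + 1 ≤ n)
    (r : Fin n → ℚ) (hr : GoodV n r) (hτ : n - 1 < n)
    (hlt : r ⟨n - 1, hτ⟩ < 1) : act n m r ⟨n - 1, hτ⟩ < 1 := by
  by_cases hsmall : m + 1 ≤ n - 1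
  · rw [act_last_eq m h1 hsmall r hτ]; exact hlt
  · have : m = n - 1 := by omega
    rw [this]
    exact act_top_lt hn r hr hτ

lemma prod_act_pres (P : (Fin n → ℚ) → Prop) :
    ∀ (L : List ℕ), (∀ m ∈ L, ∀ v, P v → P (act n m v)) →
      ∀ v, P v → P (((L.map (act n)).prod) v) := by
  intro L
  induction L with
  | nil => intro _ v hv; simpa using hv
  | cons a L ih =>
    intro h v hv
    rw [List.map_cons, List.prod_cons, Equiv.Perm.mul_apply]
    exact h a List.mem_cons_self _ (ih (fun m hm => h m (List.mem_cons_of_mem a hm)) v hv)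

end TopCoord

/-- For `n ≥ 3`, the submonoid `B⁺_{n-1}` of `B⁺_n` is closed under
right divisors. -/
theorem Bplus_pred_closed_under_right_divisors (n : ℕ) (hn : 3 ≤ n) (β γ : B n)
    (hβ : β ∈ Bplus n (n - 1)) (hγ : γ ∈ Bplus n n) (h : β * γ⁻¹ ∈ Bplus n n) :
    γ ∈ Bplus n (n - 1) := by
  obtain ⟨Lγ, hLγ, hγp⟩ := mem_Bplus_iff_list.mp hγ
  by_cases hc : ∀ m ∈ Lγ, m + 1 ≤ n - 1
  · exact mem_Bplus_iff_list.mpr ⟨Lγ, fun m hm => ⟨(hLγ m hm).1, hc m hm⟩, hγp⟩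
  · exfalso
    push_neg at hc
    obtain ⟨m0, hm0, hgt⟩ := hc
    have hm0n : m0 = n - 1 := by have := hLγ m0 hm0; omega
    obtain ⟨L1, L2, hsplit⟩ := List.append_of_mem hm0
    obtain ⟨Lδ, hLδ, hδp⟩ := mem_Bplus_iff_list.mp h
    obtain ⟨Lβ, hLβ, hβp⟩ := mem_Bplus_iff_list.mp hβ
    have hτ : n - 1 < n := by omega
    set τ : Fin n := ⟨n - 1, hτ⟩ with hτdef
    set e : Fin n → ℚ := fun k => if k = τ then 1 else 0 with hedef
    have he : GoodV n e := by
      constructor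
      · intro k; simp only [hedef]; split <;> norm_num
      · simp [hedef]
    -- the γ-side invariant
    have hγe : GoodV n (burau n γ e) ∧ (burau n γ e) τ < 1 := by
      rw [← hγp, burau_genprod, hsplit]
      rw [List.map_append, List.map_cons, List.prod_append, List.prod_cons,
        Equiv.Perm.mul_apply, Equiv.Perm.mul_apply]
      have s1 : GoodV n (((L2.map (act n)).prod) e) := by
        refine prod_act_pres (GoodV n) L2 ?_ e he
        intro m hm v hv
        exact act_GoodV m v hv
      have s2 : GoodV n (act n m0 (((L2.map (act n)).prod) e)) ∧
          (act n m0 (((L2.map (act n)).prod) e)) τ < 1 := by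
        refine ⟨act_GoodV m0 _ s1, ?_⟩
        rw [hm0n]
        exact act_top_lt hn _ s1 hτ
      refine prod_act_pres (fun v => GoodV n v ∧ v τ < 1) L1 ?_ _ s2
      intro m hm v hv
      have hmL : m ∈ Lγ := by rw [hsplit]; exact List.mem_append_left _ hm
      exact ⟨act_GoodV m v hv.1,
        act_last_lt hn m (hLγ m hmL).1 (hLγ m hmL).2 v hv.1 hτ hv.2⟩
    -- push through δ
    have hδe : (burau n (β * γ⁻¹) (burau n γ e)) τ < 1 := by
      rw [← hδp, burau_genprod]
      refine (prod_act_pres (fun v => GoodV n v ∧ v τ < 1) Lδ ?_ _ hγe).2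
      intro m hm v hv
      exact ⟨act_GoodV m v hv.1,
        act_last_lt hn m (hLδ m hm).1 (hLδ m hm).2 v hv.1 hτ hv.2⟩
    -- the β-side : last coordinate is fixed
    have hβe : (burau n β e) τ = 1 := by
      rw [← hβp, burau_genprod]
      have : (((Lβ.map (act n)).prod) e) τ = 1 := by
        refine prod_act_pres (fun v => v τ = 1) Lβ ?_ e (by simp [hedef])
        intro m hm v hv
        rw [act_last_eq m (hLβ m hm).1 (hLβ m hm).2 v hτ]
        exact hv
      exact this
    -- contradiction
    have hβeq : burau n β e = burau n (β * γ⁻¹) (burau n γ e) := by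
      rw [← Equiv.Perm.mul_apply, ← map_mul, inv_mul_cancel_right]
    rw [hβeq] at hβe
    linarith [hδe, hβe.ge]

end Braid
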